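/- Let u, v, w, x be (not necessarily distinct) points of ℝ². There exists no pair (m, c) with m > 0 such that x lies on the line L_{m,c} while u, v, w each lie on or above L_{m,c}, if and only if there is a point a = (a₁, a₂) in the convex hull of {u, v, w} such that x₁ ≤ a₁, x₂ ≥ a₂, and a ≠ x. -/

import Mathlib

private lemma key_mul (m s t : ℝ) (he : s = 0 → 0 ≤ t)
    (hp : 0 < s → m ≤ t / s) (hn : s < 0 → t / s ≤ m) : m * s ≤ t := by
  rcases lt_trichotomy s 0 with h | h | h
  · have h1 := hn h
    have h2 : m * s ≤ (t / s) * s := by nlinarith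
    rwa [div_mul_cancel₀ _ (ne_of_lt h)] at h2
  · simpa [h] using he h
  · have h1 := hp h
    have h2 : m * s ≤ (t / s) * s := by nlinarith
    rwa [div_mul_cancel₀ _ (ne_of_gt h)] at h2

private lemma ratio_le (s1 t1 s2 t2 : ℝ) (h1 : s1 < 0) (h2 : 0 < s2)
    (hc : s1 * t2 ≤ s2 * t1) : t1 / s1 ≤ t2 / s2 := by
  have hne1 : s1 ≠ 0 := ne_of_lt h1
  have hne2 : s2 ≠ 0 := ne_of_gt h2
  have heq : t1 / s1 - t2 / s2 = (s2 * t1 - s1 * t2) / (s1 * s2) := by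
    field_simp
  have hnum : 0 ≤ s2 * t1 - s1 * t2 := by linarith
  have hden : s1 * s2 < 0 := mul_neg_of_neg_of_pos h1 h2
  have : (s2 * t1 - s1 * t2) / (s1 * s2) ≤ 0 := div_nonpos_of_nonneg_of_nonpos hnum hden.le
  linarith [heq ▸ this]

private lemma aux_exists_m (s1 t1 s2 t2 s3 t3 : ℝ)
    (h1 : 0 < s1 → 0 < t1) (h2 : 0 < s2 → 0 < t2) (h3 : 0 < s3 → 0 < t3)
    (e1 : s1 = 0 → 0 ≤ t1) (e2 : s2 = 0 → 0 ≤ t2) (e3 : s3 = 0 → 0 ≤ t3)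
    (c12 : s1 < 0 → 0 < s2 → s1 * t2 ≤ s2 * t1)
    (c13 : s1 < 0 → 0 < s3 → s1 * t3 ≤ s3 * t1)
    (c21 : s2 < 0 → 0 < s1 → s2 * t1 ≤ s1 * t2)
    (c23 : s2 < 0 → 0 < s3 → s2 * t3 ≤ s3 * t2)
    (c31 : s3 < 0 → 0 < s1 → s3 * t1 ≤ s1 * t3)
    (c32 : s3 < 0 → 0 < s2 → s3 * t2 ≤ s2 * t3) :
    ∃ m : ℝ, 0 < m ∧ m * s1 ≤ t1 ∧ m * s2 ≤ t2 ∧ m * s3 ≤ t3 := by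
  set r1 : ℝ := if s1 < 0 then t1 / s1 else 0 with hr1
  set r2 : ℝ := if s2 < 0 then t2 / s2 else 0 with hr2
  set r3 : ℝ := if s3 < 0 then t3 / s3 else 0 with hr3
  set B : ℝ := 1 + max 0 (max (max r1 r2) r3) with hB
  have hBpos : 0 < B := by
    have : (0:ℝ) ≤ max 0 (max (max r1 r2) r3) := le_max_left _ _
    linarith
  set A1 : ℝ := if 0 < s1 then t1 / s1 else B with hA1
  set A2 : ℝ := if 0 < s2 then t2 / s2 else B with hA2
  set A3 : ℝ := if 0 < s3 then t3 / s3 else B with hA3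
  set m : ℝ := min (min A1 A2) A3 with hm
  have hmA1 : m ≤ A1 := le_trans (min_le_left _ _) (min_le_left _ _)
  have hmA2 : m ≤ A2 := le_trans (min_le_left _ _) (min_le_right _ _)
  have hmA3 : m ≤ A3 := min_le_right _ _
  -- positivity
  have hApos : ∀ s t : ℝ, (0 < s → 0 < t) → 0 < (if 0 < s then t / s else B) := by
    intro s t h
    split
    · exact div_pos (h (by assumption)) (by assumption)
    · exact hBpos
  have hmpos : 0 < m := by
    apply lt_min (lt_min _ _) _
    · exact hApos s1 t1 h1
    · exact hApos s2 t2 h2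
    · exact hApos s3 t3 h3
  -- r_i ≤ B for negative s_i
  have hrB1 : r1 ≤ B := by
    have : r1 ≤ max 0 (max (max r1 r2) r3) :=
      le_trans (le_trans (le_max_left _ _) (le_max_left _ _)) (le_max_right _ _)
    linarith
  have hrB2 : r2 ≤ B := by
    have : r2 ≤ max 0 (max (max r1 r2) r3) :=
      le_trans (le_trans (le_max_right _ _) (le_max_left _ _)) (le_max_right _ _)
    linarith
  have hrB3 : r3 ≤ B := by
    have : r3 ≤ max 0 (max (max r1 r2) r3) :=
      le_trans (le_max_right _ _) (le_max_right _ _)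
    linarith
  refine ⟨m, hmpos, ?_, ?_, ?_⟩
  · apply key_mul m s1 t1 e1
    · intro hs; rw [hA1, if_pos hs] at hmA1; exact hmA1
    · intro hs
      have hr : t1 / s1 = r1 := by rw [hr1, if_pos hs]
      refine le_min (le_min ?_ ?_) ?_
      · rw [hA1, if_neg (by linarith)]; linarith [hr ▸ hrB1]
      · rw [hA2]; split
        · exact ratio_le s1 t1 s2 t2 hs (by assumption) (c12 hs (by assumption))
        · linarith [hr ▸ hrB1]
      · rw [hA3]; split
        · exact ratio_le s1 t1 s3 t3 hs (by assumption) (c13 hs (by assumption))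
        · linarith [hr ▸ hrB1]
  · apply key_mul m s2 t2 e2
    · intro hs; rw [hA2, if_pos hs] at hmA2; exact hmA2
    · intro hs
      have hr : t2 / s2 = r2 := by rw [hr2, if_pos hs]
      refine le_min (le_min ?_ ?_) ?_
      · rw [hA1]; split
        · exact ratio_le s2 t2 s1 t1 hs (by assumption) (c21 hs (by assumption))
        · linarith [hr ▸ hrB2]
      · rw [hA2, if_neg (by linarith)]; linarith [hr ▸ hrB2]
      · rw [hA3]; split
        · exact ratio_le s2 t2 s3 t3 hs (by assumption) (c23 hs (by assumption))
        · linarith [hr ▸ hrB2]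
  · apply key_mul m s3 t3 e3
    · intro hs; rw [hA3, if_pos hs] at hmA3; exact hmA3
    · intro hs
      have hr : t3 / s3 = r3 := by rw [hr3, if_pos hs]
      refine le_min (le_min ?_ ?_) ?_
      · rw [hA1]; split
        · exact ratio_le s3 t3 s1 t1 hs (by assumption) (c31 hs (by assumption))
        · linarith [hr ▸ hrB3]
      · rw [hA2]; split
        · exact ratio_le s3 t3 s2 t2 hs (by assumption) (c32 hs (by assumption))
        · linarith [hr ▸ hrB3]
      · rw [hA3, if_neg (by linarith)]; linarith [hr ▸ hrB3]

theorem no_line_through_x_below_uvw_iff (u v w x : ℝ × ℝ) :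
    (¬ ∃ m c : ℝ, m > 0 ∧
        x.2 = m * x.1 + c ∧
        u.2 ≥ m * u.1 + c ∧ v.2 ≥ m * v.1 + c ∧ w.2 ≥ m * w.1 + c) ↔
    ∃ a ∈ convexHull ℝ ({u, v, w} : Set (ℝ × ℝ)), x.1 ≤ a.1 ∧ x.2 ≥ a.2 ∧ a ≠ x := by
  constructor
  · -- hard direction
    intro H
    by_contra hcon
    push_neg at hcon
    apply H
    -- hcon : ∀ a ∈ hull, x.1 ≤ a.1 → x.2 ≥ a.2 → a = x
    have hu : u ∈ convexHull ℝ ({u, v, w} : Set (ℝ × ℝ)) :=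
      subset_convexHull ℝ _ (by simp)
    have hv : v ∈ convexHull ℝ ({u, v, w} : Set (ℝ × ℝ)) :=
      subset_convexHull ℝ _ (by simp)
    have hw : w ∈ convexHull ℝ ({u, v, w} : Set (ℝ × ℝ)) :=
      subset_convexHull ℝ _ (by simp)
    -- vertex conditions
    have hvert : ∀ p : ℝ × ℝ, p ∈ convexHull ℝ ({u, v, w} : Set (ℝ × ℝ)) →
        (0 < p.1 - x.1 → 0 < p.2 - x.2) ∧ (p.1 - x.1 = 0 → 0 ≤ p.2 - x.2) := by
      intro p hp
      constructor
      · intro hs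
        by_contra ht
        push_neg at ht
        have := hcon p hp (by linarith) (by linarith)
        rw [this] at hs; simp at hs
      · intro hs
        by_contra ht
        push_neg at ht
        have := hcon p hp (by linarith) (by linarith)
        rw [this] at ht; simp at ht
    -- crossing condition
    have hcross : ∀ p q : ℝ × ℝ, p ∈ convexHull ℝ ({u, v, w} : Set (ℝ × ℝ)) →
        q ∈ convexHull ℝ ({u, v, w} : Set (ℝ × ℝ)) →
        p.1 - x.1 < 0 → 0 < q.1 - x.1 →
        (p.1 - x.1) * (q.2 - x.2) ≤ (q.1 - x.1) * (p.2 - x.2) := by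
      intro p q hp hq hsp hsq
      set d : ℝ := (q.1 - x.1) - (p.1 - x.1) with hd
      have hdpos : 0 < d := by simp [hd]; linarith
      set lam : ℝ := (q.1 - x.1) / d with hlam
      have hlam0 : 0 ≤ lam := div_nonneg hsq.le hdpos.le
      have hlam1 : lam ≤ 1 := by
        rw [hlam, div_le_one hdpos]; linarith
      set a : ℝ × ℝ := lam • p + (1 - lam) • q with ha
      have hamem : a ∈ convexHull ℝ ({u, v, w} : Set (ℝ × ℝ)) :=
        (convex_convexHull ℝ _) hp hq hlam0 (by linarith) (by ring)
      have ha1 : a.1 = x.1 := by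
        simp only [ha, Prod.fst_add, Prod.smul_fst, smul_eq_mul]
        have : lam * p.1 + (1 - lam) * q.1 - x.1 = lam * (p.1 - x.1) + (1 - lam) * (q.1 - x.1) := by ring
        have hz : lam * (p.1 - x.1) + (1 - lam) * (q.1 - x.1) = 0 := by
          rw [hlam]
          field_simp
          ring
        linarith [this ▸ hz]
      have ha2 : x.2 ≤ a.2 := by
        rcases le_or_gt a.2 x.2 with h | h
        · have := hcon a hamem (le_of_eq ha1.symm) h
          rw [this]
        · exact h.le
      have ha2' : a.2 = lam * p.2 + (1 - lam) * q.2 := by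
        simp [ha, Prod.snd_add]
      -- lam * (p.2 - x.2) + (1 - lam) * (q.2 - x.2) ≥ 0
      have hkey : 0 ≤ lam * (p.2 - x.2) + (1 - lam) * (q.2 - x.2) := by
        have : lam * (p.2 - x.2) + (1 - lam) * (q.2 - x.2) = a.2 - x.2 := by
          rw [ha2']; ring
        linarith [this]
      -- multiply by d > 0
      have hlamd : lam * d = q.1 - x.1 := by
        rw [hlam]; field_simp
      have h1ld : (1 - lam) * d = -(p.1 - x.1) := by
        have : (1 - lam) * d = d - lam * d := by ring
        rw [this, hlamd, hd]; ring
      have hnn := mul_nonneg hkey hdpos.le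
      have hexp : (lam * (p.2 - x.2) + (1 - lam) * (q.2 - x.2)) * d
          = (lam * d) * (p.2 - x.2) + ((1 - lam) * d) * (q.2 - x.2) := by ring
      rw [hexp, hlamd, h1ld] at hnn
      linarith
    obtain ⟨m, hm, hmu, hmv, hmw⟩ :=
      aux_exists_m (u.1 - x.1) (u.2 - x.2) (v.1 - x.1) (v.2 - x.2) (w.1 - x.1) (w.2 - x.2)
        (hvert u hu).1 (hvert v hv).1 (hvert w hw).1
        (hvert u hu).2 (hvert v hv).2 (hvert w hw).2
        (fun h1 h2 => hcross u v hu hv h1 h2)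
        (fun h1 h2 => hcross u w hu hw h1 h2)
        (fun h1 h2 => hcross v u hv hu h1 h2)
        (fun h1 h2 => hcross v w hv hw h1 h2)
        (fun h1 h2 => hcross w u hw hu h1 h2)
        (fun h1 h2 => hcross w v hw hv h1 h2)
    exact ⟨m, x.2 - m * x.1, hm, by ring, by nlinarith, by nlinarith, by nlinarith⟩
  · -- easy direction
    rintro ⟨a, hahull, hx1, hx2, hne⟩ ⟨m, c, hm, hx, hu, hv, hw⟩
    have hconv : Convex ℝ {p : ℝ × ℝ | m * p.1 + c ≤ p.2} := by
      have hlin : IsLinearMap ℝ (fun p : ℝ × ℝ => p.2 - m * p.1) := by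
        constructor
        · intro p q; simp [Prod.fst_add, Prod.snd_add]; ring
        · intro r p; simp [Prod.smul_fst, Prod.smul_snd, smul_eq_mul]; ring
      have := convex_halfSpace_ge hlin c
      convert this using 1
      ext p; simp [Set.mem_setOf_eq]; constructor <;> intro h <;> linarith
      ext p; simp only [Set.mem_setOf_eq]; constructor <;> intro h <;> linarith
    have hsub : ({u, v, w} : Set (ℝ × ℝ)) ⊆ {p : ℝ × ℝ | m * p.1 + c ≤ p.2} := by
      intro p hp
      rcases hp with h | h | h <;> subst h <;> simpa using (by linarith)
    have ha : m * a.1 + c ≤ a.2 := convexHull_min hsub hconv hahull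
    -- chain: a.2 ≥ m*a.1 + c ≥ m*x.1 + c = x.2 ≥ a.2
    have h1 : m * x.1 ≤ m * a.1 := mul_le_mul_of_nonneg_left hx1 hm.le
    have ha1 : a.1 = x.1 := by nlinarith
    have ha2 : a.2 = x.2 := by nlinarith
    exact hne (Prod.ext ha1 ha2)
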